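/- Let M be a finite set with m elements, and let μ and μ' be two probability distributions on the power set of M. If Pr_μ[F_ℓ^k] = Pr_{μ'}[F_ℓ^k] for every ℓ ∈ {0,1,…,m} and every k ∈ {1,…,binom(m,ℓ)}, then for every ℓ ∈ {0,1,…,m} the multisets A_ℓ(μ) and A_ℓ(μ') are equal; that is, there exists a bijection σ_ℓ of the ℓ-element subsets of M such that μ(X^↑) = μ'(σ_ℓ(X)^↑) for every ℓ-element subset X of M. -/

import Mathlib

open Finset

/-- `μ(X^↑)`: the mass that the distribution `μ` on the power set of `M` gives to the
filter generated by `X`, i.e. `∑_{Y ⊇ X} μ({Y})`. -/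
def filterMass {M : Type} [Fintype M] [DecidableEq M] (μ : Finset M → ℝ) (X : Finset M) : ℝ :=
  ∑ Y ∈ Finset.univ.filter (fun Y => X ⊆ Y), μ Y

/-- `Pr_μ[F_ℓ^k]`: the probability that `k` independent `μ`-random subsets of `M`
have intersection of size at least `ℓ`. -/
def prF {M : Type} [Fintype M] [DecidableEq M] (μ : Finset M → ℝ) (ℓ k : ℕ) : ℝ :=
  ∑ X : Fin k → Finset M,
    if ℓ ≤ (Finset.univ.inf X).card then ∏ i, μ (X i) else 0

/-- Newton's identities: equal power sums (up to the cardinality) give equal elementary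
symmetric functions. -/
theorem esymm_eq_of_powsums {α : Type} [Fintype α] (f g : α → ℝ)
    (h : ∀ k, 1 ≤ k → k ≤ Fintype.card α → ∑ x, f x ^ k = ∑ x, g x ^ k) :
    ∀ k ≤ Fintype.card α,
      (Finset.univ.val.map f).esymm k = (Finset.univ.val.map g).esymm k := by
  classical
  have hP : ∀ (u : α → ℝ) j, MvPolynomial.aeval u (MvPolynomial.psum α ℝ j) = ∑ x, u x ^ j := by
    intro u j
    simp [MvPolynomial.psum, map_sum]
  intro k
  induction k using Nat.strong_induction_on with
  | _ k ih =>
    intro hk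
    rcases Nat.eq_zero_or_pos k with rfl | hk0
    · simp [Multiset.esymm]
    · have hf := congrArg (MvPolynomial.aeval f) (MvPolynomial.mul_esymm_eq_sum α ℝ k)
      have hg := congrArg (MvPolynomial.aeval g) (MvPolynomial.mul_esymm_eq_sum α ℝ k)
      simp only [map_mul, map_natCast, map_sum, map_pow, map_neg, map_one,
        MvPolynomial.aeval_esymm_eq_multiset_esymm, hP] at hf hg
      have hsum : ∑ a ∈ (Finset.HasAntidiagonal.antidiagonal k).filter (fun a => a.1 < k),
            (-1 : ℝ) ^ a.1 * (Finset.univ.val.map f).esymm a.1 * (∑ x, f x ^ a.2)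
          = ∑ a ∈ (Finset.HasAntidiagonal.antidiagonal k).filter (fun a => a.1 < k),
            (-1 : ℝ) ^ a.1 * (Finset.univ.val.map g).esymm a.1 * (∑ x, g x ^ a.2) := by
        refine Finset.sum_congr rfl fun a ha => ?_
        rw [Finset.mem_filter, Finset.HasAntidiagonal.mem_antidiagonal] at ha
        rw [ih a.1 ha.2 (le_trans (le_of_lt ha.2) hk), h a.2 (by omega) (by omega)]
      have : (k : ℝ) * (Finset.univ.val.map f).esymm k
          = (k : ℝ) * (Finset.univ.val.map g).esymm k := by
        rw [hf, hg, hsum]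
      exact mul_left_cancel₀ (Nat.cast_ne_zero.mpr hk0.ne') this

/-- Equal power sums (up to the cardinality) imply equal multisets of values. -/
theorem multiset_map_eq_of_powsums {α : Type} [Fintype α] (f g : α → ℝ)
    (h : ∀ k, 1 ≤ k → k ≤ Fintype.card α → ∑ x, f x ^ k = ∑ x, g x ^ k) :
    Finset.univ.val.map f = Finset.univ.val.map g := by
  classical
  have hE := esymm_eq_of_powsums f g h
  set s := Finset.univ.val.map f with hs
  set t := Finset.univ.val.map g with ht
  have hcs : Multiset.card s = Fintype.card α := by simp [hs]
  have hct : Multiset.card t = Fintype.card α := by simp [ht]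
  have hp : (s.map fun r => Polynomial.X - Polynomial.C r).prod
      = (t.map fun r => Polynomial.X - Polynomial.C r).prod := by
    apply Polynomial.ext
    intro i
    rcases le_or_gt i (Fintype.card α) with hi | hi
    · rw [Multiset.prod_X_sub_C_coeff s (by omega), Multiset.prod_X_sub_C_coeff t (by omega),
        hcs, hct, hE _ (by omega)]
    · rw [Polynomial.coeff_eq_zero_of_natDegree_lt
        (by rw [Polynomial.natDegree_multiset_prod_X_sub_C_eq_card, hcs]; omega),
        Polynomial.coeff_eq_zero_of_natDegree_lt
        (by rw [Polynomial.natDegree_multiset_prod_X_sub_C_eq_card, hct]; omega)]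
  have := congrArg Polynomial.roots hp
  rwa [Polynomial.roots_multiset_prod_X_sub_C, Polynomial.roots_multiset_prod_X_sub_C] at this

/-- If two functions on a finite type induce equal multisets of values, there is a bijection
identifying them. -/
theorem exists_equiv_of_map_eq {α : Type} [Fintype α] [DecidableEq α] (f g : α → ℝ)
    (h : Finset.univ.val.map f = Finset.univ.val.map g) :
    ∃ σ : α ≃ α, ∀ x, f x = g (σ x) := by
  classical
  have hcard : ∀ c : ℝ, Fintype.card {x // f x = c} = Fintype.card {x // g x = c} := by
    intro c
    have hc := congrArg (Multiset.count c) h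
    rw [Multiset.count_map, Multiset.count_map] at hc
    rw [Fintype.card_subtype, Fintype.card_subtype]
    simp only [Finset.card, Finset.filter_val]
    simpa [eq_comm] using hc
  exact ⟨Equiv.ofFiberEquiv (fun c => Fintype.equivOfCardEq (hcard c)),
    fun x => (Equiv.ofFiberEquiv_map _ x).symm⟩

/-- Telescoping identity for binomial coefficients. -/
theorem tele (ℓ : ℕ) : ∀ c : ℕ,
    (if ℓ ≤ c then (1 : ℝ) else 0)
      + ∑ j ∈ Finset.Icc (ℓ + 1) c, ((j.choose ℓ : ℝ) - ((j - 1).choose ℓ : ℝ))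
      = (c.choose ℓ : ℝ) := by
  intro c
  induction c with
  | zero =>
    rcases Nat.eq_zero_or_pos ℓ with rfl | hℓ
    · simp
    · rw [Finset.Icc_eq_empty (by omega), if_neg (by omega)]
      simp [Nat.choose_eq_zero_of_lt hℓ]
  | succ c ih =>
    rcases le_or_gt ℓ c with hc | hc
    · rw [if_pos hc] at ih
      rw [Finset.sum_Icc_succ_top (by omega), if_pos (by omega), Nat.add_sub_cancel,
        ← add_assoc, ih]
      ring
    · rcases eq_or_lt_of_le (Nat.succ_le_of_lt hc) with he | hlt
      · rw [Finset.Icc_eq_empty (by omega), if_pos (by omega)]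
        simp [← he]
      · rw [Finset.Icc_eq_empty (by omega), if_neg (by omega)]
        simp [Nat.choose_eq_zero_of_lt hlt]

/-- The `k`-th power sum of the filter masses of the `ℓ`-sets, expressed in terms of the
probabilities `Pr[F_j^k]` for `j ≥ ℓ`. -/
theorem PS_eq {M : Type} [Fintype M] [DecidableEq M] (μ : Finset M → ℝ) (ℓ k : ℕ) :
    ∑ X ∈ Finset.powersetCard ℓ (Finset.univ : Finset M), filterMass μ X ^ k
      = prF μ ℓ k + ∑ j ∈ Finset.Icc (ℓ + 1) (Fintype.card M),
          ((j.choose ℓ : ℝ) - ((j - 1).choose ℓ : ℝ)) * prF μ j k := by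
  classical
  have h1 : ∀ X : Finset M, filterMass μ X ^ k
      = ∑ g : Fin k → Finset M, if X ⊆ Finset.univ.inf g then ∏ i, μ (g i) else 0 := by
    intro X
    rw [filterMass, Finset.sum_filter, Finset.sum_pow', Fintype.piFinset_univ]
    refine Finset.sum_congr rfl fun g _ => ?_
    rw [Fintype.prod_ite_zero]
    congr 1
    simp [Finset.le_inf_iff, ← Finset.le_eq_subset]
  have hcard : ∀ g : Fin k → Finset M, (Finset.univ.inf g).card ≤ Fintype.card M := by
    intro g
    simpa using Finset.card_le_card (Finset.subset_univ (Finset.univ.inf g))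
  calc
    ∑ X ∈ Finset.powersetCard ℓ (Finset.univ : Finset M), filterMass μ X ^ k
        = ∑ g : Fin k → Finset M, ∑ X ∈ Finset.powersetCard ℓ (Finset.univ : Finset M),
            if X ⊆ Finset.univ.inf g then ∏ i, μ (g i) else 0 := by
          rw [Finset.sum_congr rfl fun X _ => h1 X, Finset.sum_comm]
    _ = ∑ g : Fin k → Finset M,
          (((Finset.univ.inf g).card.choose ℓ : ℝ)) * ∏ i, μ (g i) := by
          refine Finset.sum_congr rfl fun g _ => ?_
          rw [← Finset.sum_filter, Finset.sum_const, nsmul_eq_mul]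
          congr 2
          · rw [show (Finset.powersetCard ℓ (Finset.univ : Finset M)).filter
                (fun X => X ⊆ Finset.univ.inf g) = Finset.powersetCard ℓ (Finset.univ.inf g) by
              ext X
              simp [Finset.mem_powersetCard, and_comm]]
            exact Finset.card_powersetCard ℓ _
    _ = ∑ g : Fin k → Finset M,
          ((if ℓ ≤ (Finset.univ.inf g).card then (1 : ℝ) else 0)
            + ∑ j ∈ Finset.Icc (ℓ + 1) (Fintype.card M),
                (if j ≤ (Finset.univ.inf g).card then
                  ((j.choose ℓ : ℝ) - ((j - 1).choose ℓ : ℝ)) else 0)) * ∏ i, μ (g i) := by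
          refine Finset.sum_congr rfl fun g _ => ?_
          congr 1
          rw [← tele ℓ (Finset.univ.inf g).card]
          congr 1
          rw [← Finset.sum_filter]
          congr 1
          ext j
          simp only [Finset.mem_filter, Finset.mem_Icc]
          have := hcard g
          omega
    _ = prF μ ℓ k + ∑ j ∈ Finset.Icc (ℓ + 1) (Fintype.card M),
          ((j.choose ℓ : ℝ) - ((j - 1).choose ℓ : ℝ)) * prF μ j k := by
          rw [prF]
          simp only [add_mul, Finset.sum_add_distrib, Finset.sum_mul]
          congr 1
          · refine Finset.sum_congr rfl fun g _ => ?_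
            split_ifs <;> ring
          · rw [Finset.sum_comm]
            refine Finset.sum_congr rfl fun j _ => ?_
            rw [prF, Finset.mul_sum]
            refine Finset.sum_congr rfl fun g _ => ?_
            split_ifs <;> ring

/-- If two probability distributions on the power set of an `m`-element set
give the same probabilities `Pr[F_ℓ^k]` for all `ℓ ∈ [m]₀` and `k ∈ [binom(m,ℓ)]`, then for
each `ℓ` the multisets `A_ℓ = {μ(X^↑) : |X| = ℓ}` coincide. -/
theorem prF_determines_filter_masses
    {M : Type} [Fintype M] [DecidableEq M] (m : ℕ) (hm : Fintype.card M = m)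
    (μ μ' : Finset M → ℝ)
    (hμ0 : ∀ X, 0 ≤ μ X) (hμ1 : ∑ X : Finset M, μ X = 1)
    (hμ'0 : ∀ X, 0 ≤ μ' X) (hμ'1 : ∑ X : Finset M, μ' X = 1)
    (heq : ∀ ℓ ≤ m, ∀ k, 1 ≤ k → k ≤ m.choose ℓ → prF μ ℓ k = prF μ' ℓ k) :
    ∀ ℓ ≤ m, ∃ σ : {X : Finset M // X.card = ℓ} ≃ {X : Finset M // X.card = ℓ},
      ∀ X : {X : Finset M // X.card = ℓ}, filterMass μ X.1 = filterMass μ' (σ X).1 := by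
  classical
  subst hm
  have hsub : ∀ (ν : Finset M → ℝ) (ℓ k : ℕ),
      ∑ x : {X : Finset M // X.card = ℓ}, filterMass ν x.1 ^ k
        = ∑ X ∈ Finset.powersetCard ℓ (Finset.univ : Finset M), filterMass ν X ^ k := by
    intro ν ℓ k
    exact (Finset.sum_subtype (Finset.powersetCard ℓ (Finset.univ : Finset M))
      (fun X => Finset.mem_powersetCard_univ) (fun X => filterMass ν X ^ k)).symm
  have main : ∀ d ℓ, ℓ ≤ Fintype.card M → Fintype.card M - ℓ < d →
      (Finset.univ.val.map (fun x : {X : Finset M // X.card = ℓ} => filterMass μ x.1)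
        = Finset.univ.val.map (fun x : {X : Finset M // X.card = ℓ} => filterMass μ' x.1))
      ∧ ∀ k, 1 ≤ k → prF μ ℓ k = prF μ' ℓ k := by
    intro d
    induction d with
    | zero => intro ℓ _ h; omega
    | succ d ih =>
      intro ℓ hℓ hd
      have hIH : ∀ j ∈ Finset.Icc (ℓ + 1) (Fintype.card M),
          ∀ k, 1 ≤ k → prF μ j k = prF μ' j k := by
        intro j hj k hk
        rw [Finset.mem_Icc] at hj
        exact (ih j hj.2 (by omega)).2 k hk
      have hps : ∀ k, 1 ≤ k → k ≤ (Fintype.card M).choose ℓ →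
          ∑ x : {X : Finset M // X.card = ℓ}, filterMass μ x.1 ^ k
            = ∑ x : {X : Finset M // X.card = ℓ}, filterMass μ' x.1 ^ k := by
        intro k hk1 hk2
        rw [hsub, hsub, PS_eq, PS_eq, heq ℓ hℓ k hk1 hk2]
        congr 1
        exact Finset.sum_congr rfl fun j hj => by rw [hIH j hj k hk1]
      have hmap := multiset_map_eq_of_powsums
        (fun x : {X : Finset M // X.card = ℓ} => filterMass μ x.1)
        (fun x : {X : Finset M // X.card = ℓ} => filterMass μ' x.1)
        (by
          intro k hk1 hk2
          exact hps k hk1 (by rwa [Fintype.card_finset_len] at hk2))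
      refine ⟨hmap, ?_⟩
      intro k hk1
      have hPSall : ∑ x : {X : Finset M // X.card = ℓ}, filterMass μ x.1 ^ k
          = ∑ x : {X : Finset M // X.card = ℓ}, filterMass μ' x.1 ^ k := by
        have h2 := congrArg (fun s : Multiset ℝ => (s.map (· ^ k)).sum) hmap
        simp only [Multiset.map_map, Function.comp] at h2
        rw [Finset.sum_eq_multiset_sum, Finset.sum_eq_multiset_sum]
        exact h2
      have e1 := PS_eq μ ℓ k
      have e2 := PS_eq μ' ℓ k
      rw [← hsub] at e1 e2
      have hS : ∑ j ∈ Finset.Icc (ℓ + 1) (Fintype.card M),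
            ((j.choose ℓ : ℝ) - ((j - 1).choose ℓ : ℝ)) * prF μ j k
          = ∑ j ∈ Finset.Icc (ℓ + 1) (Fintype.card M),
            ((j.choose ℓ : ℝ) - ((j - 1).choose ℓ : ℝ)) * prF μ' j k :=
        Finset.sum_congr rfl fun j hj => by rw [hIH j hj k hk1]
      rw [hPSall] at e1
      rw [e2, hS] at e1
      linarith
  intro ℓ hℓ
  exact exists_equiv_of_map_eq _ _ (main (Fintype.card M - ℓ + 1) ℓ hℓ (by omega)).1
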